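/- Let x₁,…,x_n ∈ ZMod 2 and let S ⊆ {1,…,n} and its complement S̄ partition the indices. If for i ∈ S the x_i are i.i.d. uniform random bits independent of (x_j)_{j∈S̄}, then the joint distribution of the multiset of all announced bits {x_1,…,x_n} reveals no information about S beyond its cardinality: for any two subsets S, S' of equal size and fixed values of the non-participant bits having the same multiset distribution, the distributions of the announced tuple after a uniformly random permutation are equal. -/

import Mathlib

open Finset

/-- There is a permutation carrying `S` onto `S'` and matching `y` with `y'` outside `S`. -/
lemma exists_relabel (n : ℕ) (S S' : Finset (Fin n)) (hcard : S.card = S'.card)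
    (y y' : Fin n → ZMod 2)
    (hmult : Multiset.map y Sᶜ.val = Multiset.map y' S'ᶜ.val) :
    ∃ τ : Equiv.Perm (Fin n), (∀ i, i ∈ S ↔ τ i ∈ S') ∧ (∀ i, i ∉ S → y' (τ i) = y i) := by
  classical
  -- fiber cardinalities agree
  have hfib : ∀ v : ZMod 2,
      Fintype.card {a : ↥(Sᶜ) // y ↑a = v} = Fintype.card {b : ↥(S'ᶜ) // y' ↑b = v} := by
    intro v
    have h1 : Fintype.card {a : ↥(Sᶜ) // y ↑a = v}
        = ((Sᶜ).filter (fun i => y i = v)).card := by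
      rw [Fintype.card_congr (Equiv.subtypeSubtypeEquivSubtypeInter (· ∈ Sᶜ) (fun i => y i = v))]
      rw [Fintype.card_subtype]
      congr 1
      ext i
      simp [Finset.mem_filter]
    have h2 : Fintype.card {b : ↥(S'ᶜ) // y' ↑b = v}
        = ((S'ᶜ).filter (fun i => y' i = v)).card := by
      rw [Fintype.card_congr (Equiv.subtypeSubtypeEquivSubtypeInter (· ∈ S'ᶜ) (fun i => y' i = v))]
      rw [Fintype.card_subtype]
      congr 1
      ext i
      simp [Finset.mem_filter]
    have hc : Multiset.count v (Multiset.map y Sᶜ.val)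
        = Multiset.count v (Multiset.map y' S'ᶜ.val) := by rw [hmult]
    rw [Multiset.count_map, Multiset.count_map] at hc
    rw [h1, h2]
    simpa [Finset.card_filter, Finset.filter, eq_comm] using hc
  -- equivalence between the complements respecting y, y'
  let e2 : ∀ v : ZMod 2, {a : ↥(Sᶜ) // y ↑a = v} ≃ {b : ↥(S'ᶜ) // y' ↑b = v} :=
    fun v => Fintype.equivOfCardEq (hfib v)
  let eC : ↥(Sᶜ) ≃ ↥(S'ᶜ) :=
    ((Equiv.sigmaFiberEquiv (fun a : ↥(Sᶜ) => y ↑a)).symm.trans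
      (Equiv.sigmaCongrRight e2)).trans (Equiv.sigmaFiberEquiv (fun b : ↥(S'ᶜ) => y' ↑b))
  have heC : ∀ a : ↥(Sᶜ), y' ↑(eC a) = y ↑a := by
    intro a
    have : eC a = ↑(e2 (y ↑a) ⟨a, rfl⟩) := rfl
    rw [this]
    exact (e2 (y ↑a) ⟨a, rfl⟩).2
  -- equivalence between S and S'
  have hcard' : Fintype.card ↥S = Fintype.card ↥S' := by
    simp [Fintype.card_coe, hcard]
  let eS : ↥S ≃ ↥S' := Fintype.equivOfCardEq hcard'
  -- assemble the permutation
  let eL : {i : Fin n // ¬ i ∈ S} ≃ {i : Fin n // ¬ i ∈ S'} :=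
    ((Equiv.subtypeEquivRight (fun i => (Finset.mem_compl (a := i)).symm)).trans eC).trans
      (Equiv.subtypeEquivRight (fun i => (Finset.mem_compl (a := i))))
  let τ : Equiv.Perm (Fin n) :=
    ((Equiv.sumCompl (· ∈ S)).symm.trans (eS.sumCongr eL)).trans (Equiv.sumCompl (· ∈ S'))
  have hτpos : ∀ i (h : i ∈ S), τ i = ↑(eS ⟨i, h⟩) := by
    intro i h
    simp only [τ, Equiv.trans_apply, Equiv.sumCompl_symm_apply_of_pos (p := (· ∈ S)) h,
      Equiv.sumCongr_apply, Sum.map_inl, Equiv.sumCompl_apply_inl]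
  have hτneg : ∀ i (h : ¬ i ∈ S), τ i = ↑(eL ⟨i, h⟩) := by
    intro i h
    simp only [τ, Equiv.trans_apply, Equiv.sumCompl_symm_apply_of_neg (p := (· ∈ S)) h,
      Equiv.sumCongr_apply, Sum.map_inr, Equiv.sumCompl_apply_inr]
  refine ⟨τ, ?_, ?_⟩
  · intro i
    by_cases h : i ∈ S
    · simp only [h, true_iff]
      rw [hτpos i h]
      exact (eS ⟨i, h⟩).2
    · simp only [h, false_iff]
      rw [hτneg i h]
      exact (eL ⟨i, h⟩).2
  · intro i h
    rw [hτneg i h]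
    have : (↑(eL ⟨i, h⟩) : Fin n)
        = ↑(eC ((Equiv.subtypeEquivRight (fun i => (Finset.mem_compl (a := i)).symm)) ⟨i, h⟩)) :=
      rfl
    rw [this, heC]
    rfl

theorem announcement_anonymity (n : ℕ) (S S' : Finset (Fin n)) (hcard : S.card = S'.card)
    (y y' : Fin n → ZMod 2)
    (hmult : Multiset.map y Sᶜ.val = Multiset.map y' S'ᶜ.val)
    (t : Fin n → ZMod 2) :
    ((univ : Finset ((Fin n → ZMod 2) × Equiv.Perm (Fin n))).filter
        (fun p => ∀ k, t k = if p.2 k ∈ S then p.1 (p.2 k) else y (p.2 k))).card =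
    ((univ : Finset ((Fin n → ZMod 2) × Equiv.Perm (Fin n))).filter
        (fun p => ∀ k, t k = if p.2 k ∈ S' then p.1 (p.2 k) else y' (p.2 k))).card := by
  classical
  obtain ⟨τ, hmem, hy⟩ := exists_relabel n S S' hcard y y' hmult
  refine Finset.card_bij' (fun p _ => (p.1 ∘ τ.symm, p.2.trans τ))
    (fun p _ => (p.1 ∘ τ, p.2.trans τ.symm)) ?hi ?hj ?li ?ri
  case hi =>
    intro p hp
    simp only [Finset.mem_filter, Finset.mem_univ, true_and] at hp ⊢
    intro k
    have := hp k
    simp only [Equiv.trans_apply, Function.comp_apply, Equiv.symm_apply_apply]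
    by_cases h : p.2 k ∈ S
    · rw [if_pos h] at this
      rw [if_pos ((hmem _).mp h)]
      exact this
    · rw [if_neg h] at this
      rw [if_neg (fun hc => h ((hmem _).mpr hc)), hy _ h]
      exact this
  case hj =>
    intro p hp
    simp only [Finset.mem_filter, Finset.mem_univ, true_and] at hp ⊢
    intro k
    have := hp k
    simp only [Equiv.trans_apply, Function.comp_apply, Equiv.apply_symm_apply]
    by_cases h : τ.symm (p.2 k) ∈ S
    · rw [if_pos h]
      have h' : p.2 k ∈ S' := by
        have h2 := (hmem _).mp h
        rwa [Equiv.apply_symm_apply] at h2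
      rw [if_pos h'] at this
      exact this
    · rw [if_neg h]
      have h' : p.2 k ∉ S' := by
        intro hc
        exact h ((hmem _).mpr (by rwa [Equiv.apply_symm_apply]))
      rw [if_neg h'] at this
      have h2 := hy _ h
      rw [Equiv.apply_symm_apply] at h2
      rw [this, h2]
  case li =>
    intro p hp
    refine Prod.ext ?_ ?_
    · funext x; simp
    · ext x; simp
  case ri =>
    intro p hp
    refine Prod.ext ?_ ?_
    · funext x; simp
    · ext x; simp
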